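/- Let α = ϱ¹T + ϱ²N + ϱ³B₁ be an osculating curve of type 2 in G¹₄. (1) If σ ≠ 0, then ϱ¹(s) = s + c₁₅, ϱ³ ≡ 0, and ϱ²(s) = -ε₁∫(s + c₁₅)κ(s)ds + c₁₆. (2) If σ ≡ 0 and τ, κ are nonzero constants, then ϱ³ satisfies ϱ³'' + τ²ϱ³ = τκε₁ε₂(s + c₁₅), whose general solution is ϱ³(s) = a₁ sin(τs) + a₂ cos(τs) + ε₁ε₂(κ/τ)(s + c₁₅), and ϱ² = -ε₂ϱ³'/τ. -/

import Mathlib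

/-- For an osculating curve of type 2 in `G¹₄` (coefficient system
`ϱ¹' = 1`, `ε₁κϱ¹ + ϱ²' - ε₂τϱ³ = 0`, `ϱ³' + ε₂τϱ² = 0`, `ε₃σϱ³ = 0`):
(1) if `σ ≠ 0` everywhere then `ϱ¹ s = s + c₁₅`, `ϱ³ ≡ 0` and
`ϱ² s = -ε₁∫₀ˢ(u + c₁₅)κ(u)du + c₁₆`;
(2) if `σ ≡ 0` and `τ, κ` are constants (`τ ≠ 0`) then `ϱ¹ s = s + c₁₅`,
`ϱ³ s = a₁ sin(τs) + a₂ cos(τs) + ε₁ε₂(κ/τ)(s + c₁₅)` and `ϱ² = -ε₂ϱ³'/τ`. -/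
theorem osculating_type_two
    (ϱ1 ϱ2 ϱ3 κ τ σ : ℝ → ℝ) (ε₁ ε₂ ε₃ : ℝ)
    (hε₁ : ε₁ = 1 ∨ ε₁ = -1) (hε₂ : ε₂ = -ε₁) (hε₃ : ε₃ = 1 ∨ ε₃ = -1)
    (hκ : Continuous κ)
    (hϱ2d : Differentiable ℝ ϱ2) (hϱ3d : Differentiable ℝ ϱ3)
    (h1 : ∀ s, HasDerivAt ϱ1 1 s)
    (h2 : ∀ s, ε₁ * κ s * ϱ1 s + deriv ϱ2 s - ε₂ * τ s * ϱ3 s = 0)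
    (h3 : ∀ s, deriv ϱ3 s + ε₂ * τ s * ϱ2 s = 0)
    (h4 : ∀ s, ε₃ * σ s * ϱ3 s = 0) :
    ((∀ s, σ s ≠ 0) →
      ∃ c₁₅ c₁₆ : ℝ, ∀ s : ℝ,
        ϱ1 s = s + c₁₅ ∧ ϱ3 s = 0 ∧
        ϱ2 s = -ε₁ * (∫ u in (0:ℝ)..s, (u + c₁₅) * κ u) + c₁₆) ∧
    (∀ τ₀ κ₀ : ℝ, τ₀ ≠ 0 → (∀ s, σ s = 0) → (∀ s, τ s = τ₀) → (∀ s, κ s = κ₀) →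
      ∃ c₁₅ a₁ a₂ : ℝ, ∀ s : ℝ,
        ϱ1 s = s + c₁₅ ∧
        ϱ3 s = a₁ * Real.sin (τ₀ * s) + a₂ * Real.cos (τ₀ * s)
          + ε₁ * ε₂ * (κ₀ / τ₀) * (s + c₁₅) ∧
        ϱ2 s = -ε₂ * deriv ϱ3 s / τ₀) := by
  have hε₁sq : ε₁ * ε₁ = 1 := by rcases hε₁ with h | h <;> simp [h]
  have hε₁0 : ε₁ ≠ 0 := by rcases hε₁ with h | h <;> simp [h]
  have hε₂sq : ε₂ * ε₂ = 1 := by rcases hε₁ with h | h <;> simp [hε₂, h]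
  -- ϱ1 s = s + ϱ1 0
  have hϱ1 : ∀ s, ϱ1 s = s + ϱ1 0 := by
    intro s
    have hd : ∀ x, HasDerivAt (fun t => ϱ1 t - t) 0 x := by
      intro x
      have := (h1 x).sub (hasDerivAt_id' x)
      exact this.congr_deriv (by ring)
    have hc : (fun t => ϱ1 t - t) s = (fun t => ϱ1 t - t) 0 :=
      is_const_of_deriv_eq_zero (fun x => (hd x).differentiableAt)
        (fun x => (hd x).deriv) s 0
    simp at hc
    linarith
  constructor
  · -- Part 1
    intro hσ
    refine ⟨ϱ1 0, ϱ2 0, fun s => ?_⟩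
    have hε₃0 : ε₃ ≠ 0 := by rcases hε₃ with h | h <;> simp [h]
    have hϱ3 : ∀ s, ϱ3 s = 0 := by
      intro s
      have := h4 s
      rcases mul_eq_zero.mp this with h | h
      · rcases mul_eq_zero.mp h with h | h
        · exact absurd h hε₃0
        · exact absurd h (hσ s)
      · exact h
    refine ⟨hϱ1 s, hϱ3 s, ?_⟩
    have hderiv : ∀ u, HasDerivAt ϱ2 (-ε₁ * ((u + ϱ1 0) * κ u)) u := by
      intro u
      have h := h2 u
      rw [hϱ3 u, hϱ1 u] at h
      have : deriv ϱ2 u = -ε₁ * ((u + ϱ1 0) * κ u) := by ring_nf; ring_nf at h; linarith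
      exact this ▸ (hϱ2d u).hasDerivAt
    have hint : IntervalIntegrable (fun u => -ε₁ * ((u + ϱ1 0) * κ u)) MeasureTheory.volume 0 s := by
      exact (continuous_const.mul ((continuous_id.add continuous_const).mul hκ)).intervalIntegrable _ _
    have := intervalIntegral.integral_eq_sub_of_hasDerivAt
      (fun u _ => hderiv u) hint
    rw [intervalIntegral.integral_const_mul] at this
    linarith
  · -- Part 2
    intro τ₀ κ₀ hτ₀ hσ0 hτ hκ0
    -- derivative facts
    have hd3 : ∀ s, HasDerivAt ϱ3 (-ε₂ * τ₀ * ϱ2 s) s := by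
      intro s
      have h := h3 s
      rw [hτ s] at h
      have : deriv ϱ3 s = -ε₂ * τ₀ * ϱ2 s := by linarith
      exact this ▸ (hϱ3d s).hasDerivAt
    have hd2 : ∀ s, HasDerivAt ϱ2 (ε₂ * τ₀ * ϱ3 s - ε₁ * κ₀ * (s + ϱ1 0)) s := by
      intro s
      have h := h2 s
      rw [hτ s, hκ0 s, hϱ1 s] at h
      have : deriv ϱ2 s = ε₂ * τ₀ * ϱ3 s - ε₁ * κ₀ * (s + ϱ1 0) := by linarith
      exact this ▸ (hϱ2d s).hasDerivAt
    set c := ϱ1 0 with hc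
    set F : ℝ → ℝ := fun s => ϱ3 s - ε₁ * ε₂ * (κ₀ / τ₀) * (s + c) with hF
    set G : ℝ → ℝ := fun s => -ε₂ * τ₀ * ϱ2 s - ε₁ * ε₂ * (κ₀ / τ₀) with hG
    have hFd : ∀ s, HasDerivAt F (G s) s := by
      intro s
      have hlin : HasDerivAt (fun t : ℝ => ε₁ * ε₂ * (κ₀ / τ₀) * (t + c))
          (ε₁ * ε₂ * (κ₀ / τ₀)) s := by
        have := ((hasDerivAt_id s).add_const c).const_mul (ε₁ * ε₂ * (κ₀ / τ₀))
        simpa using this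
      exact (hd3 s).sub hlin
    have hGd : ∀ s, HasDerivAt G (-(τ₀ ^ 2) * F s) s := by
      intro s
      have := ((hd2 s).const_mul (-ε₂ * τ₀)).sub_const (ε₁ * ε₂ * (κ₀ / τ₀))
      have heq : -ε₂ * τ₀ * (ε₂ * τ₀ * ϱ3 s - ε₁ * κ₀ * (s + c)) = -(τ₀ ^ 2) * F s := by
        simp only [hF]
        field_simp
        linear_combination (-(τ₀ * ϱ3 s)) * hε₂sq
      rw [heq] at this
      exact this
    set A1 : ℝ → ℝ := fun s => F s * Real.sin (τ₀ * s) + (G s / τ₀) * Real.cos (τ₀ * s) with hA1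
    set A2 : ℝ → ℝ := fun s => F s * Real.cos (τ₀ * s) - (G s / τ₀) * Real.sin (τ₀ * s) with hA2
    have hsin : ∀ s, HasDerivAt (fun t => Real.sin (τ₀ * t)) (τ₀ * Real.cos (τ₀ * s)) s := by
      intro s
      have := (Real.hasDerivAt_sin (τ₀ * s)).comp s ((hasDerivAt_id s).const_mul τ₀)
      exact this.congr_deriv (by simp [mul_comm])
    have hcos : ∀ s, HasDerivAt (fun t => Real.cos (τ₀ * t)) (-(τ₀ * Real.sin (τ₀ * s))) s := by
      intro s
      have := (Real.hasDerivAt_cos (τ₀ * s)).comp s ((hasDerivAt_id s).const_mul τ₀)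
      exact this.congr_deriv (by simp [mul_comm])
    have hA1d : ∀ s, HasDerivAt A1 0 s := by
      intro s
      have h := (((hFd s).mul (hsin s)).add (((hGd s).div_const τ₀).mul (hcos s)))
      have heq : G s * Real.sin (τ₀ * s) + F s * (τ₀ * Real.cos (τ₀ * s)) +
          (-(τ₀ ^ 2) * F s / τ₀ * Real.cos (τ₀ * s) + G s / τ₀ * -(τ₀ * Real.sin (τ₀ * s))) = 0 := by
        field_simp
        ring
      rw [heq] at h
      exact h
    have hA2d : ∀ s, HasDerivAt A2 0 s := by
      intro s
      have h := (((hFd s).mul (hcos s)).sub (((hGd s).div_const τ₀).mul (hsin s)))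
      have heq : G s * Real.cos (τ₀ * s) + F s * -(τ₀ * Real.sin (τ₀ * s)) -
          (-(τ₀ ^ 2) * F s / τ₀ * Real.sin (τ₀ * s) + G s / τ₀ * (τ₀ * Real.cos (τ₀ * s))) = 0 := by
        field_simp
        ring
      rw [heq] at h
      exact h
    have hA1c : ∀ s, A1 s = A1 0 := fun s =>
      is_const_of_deriv_eq_zero (fun x => (hA1d x).differentiableAt)
        (fun x => (hA1d x).deriv) s 0
    have hA2c : ∀ s, A2 s = A2 0 := fun s =>
      is_const_of_deriv_eq_zero (fun x => (hA2d x).differentiableAt)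
        (fun x => (hA2d x).deriv) s 0
    refine ⟨c, A1 0, A2 0, fun s => ?_⟩
    refine ⟨hϱ1 s, ?_, ?_⟩
    · have key : A1 s * Real.sin (τ₀ * s) + A2 s * Real.cos (τ₀ * s) = F s := by
        simp only [hA1, hA2]
        have h := Real.sin_sq_add_cos_sq (τ₀ * s)
        linear_combination F s * h
      rw [hA1c s, hA2c s] at key
      have : ϱ3 s = F s + ε₁ * ε₂ * (κ₀ / τ₀) * (s + c) := by simp [hF]
      rw [this, ← key]
    · have h := h3 s
      rw [hτ s] at h
      have hd : deriv ϱ3 s = -ε₂ * τ₀ * ϱ2 s := by linarith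
      rw [hd]
      field_simp
      linear_combination (-(ϱ2 s)) * hε₂sq
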